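/- Let a > 2, lₖ = exp(−aᵏ), and sₖ = 1 − 2exp(aᵏ⁻¹ − aᵏ). Then moreover sₖ > 1/3 for all sufficiently large k, and the product ∏ₖ₌₁^∞ (1 − sₖ) converges to 0; in particular the associated generalized Cantor set has Lebesgue measure zero. -/

import Mathlib

open Filter

/-- With `sₖ = 1 − 2 exp(aᵏ⁻¹ − aᵏ)` and `a > 2`: `sₖ > 1/3` for all sufficiently large
`k`, and the partial products `∏ₖ₌₁ᴺ (1 − sₖ)` tend to `0`; in particular the associated
generalized Cantor set has Lebesgue measure zero. -/
theorem cantor_proportions_large_and_product_zero (a : ℝ) (ha : 2 < a) :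
    (∃ K : ℕ, ∀ k : ℕ, K ≤ k → 1 / 3 < 1 - 2 * Real.exp (a ^ (k - 1) - a ^ k)) ∧
    Tendsto (fun N : ℕ =>
        ∏ k ∈ Finset.Icc 1 N, (1 - (1 - 2 * Real.exp (a ^ (k - 1) - a ^ k))))
      atTop (nhds 0) := by
  have ha1 : (1:ℝ) < a := by linarith
  have hlog3 : Real.log 3 < 2 := by
    have := Real.log_lt_sub_one_of_pos (x := 3) (by norm_num) (by norm_num)
    linarith
  constructor
  · refine ⟨2, fun k hk => ?_⟩
    have hk1 : 1 ≤ k - 1 := by omega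
    have hkk : k - 1 + 1 = k := by omega
    have hpow : (2:ℝ) ≤ a ^ (k - 1) := by
      calc (2:ℝ) ≤ a := le_of_lt ha
      _ = a ^ 1 := (pow_one a).symm
      _ ≤ a ^ (k - 1) := pow_le_pow_right₀ (le_of_lt ha1) hk1
    have hdiff : a ^ (k - 1) - a ^ k = a ^ (k - 1) * (1 - a) := by
      have h : a ^ k = a ^ (k - 1) * a := by rw [← pow_succ, hkk]
      rw [h]; ring
    have hlt : a ^ (k - 1) - a ^ k < Real.log (1/3) := by
      rw [hdiff, Real.log_div one_ne_zero (by norm_num), Real.log_one]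
      have h1 : a ^ (k - 1) * (1 - a) ≤ 2 * (1 - a) :=
        mul_le_mul_of_nonpos_right hpow (by linarith)
      have h2 : 2 * (1 - a) < -2 := by linarith
      linarith
    have := Real.exp_lt_exp.mpr hlt
    rw [Real.exp_log (by norm_num : (0:ℝ) < 1/3)] at this
    linarith
  · have hcalc : ∀ N : ℕ, ∏ k ∈ Finset.Icc 1 N, (1 - (1 - 2 * Real.exp (a ^ (k - 1) - a ^ k)))
        = Real.exp ((N : ℝ) * Real.log 2 + (1 - a ^ N)) := by
      intro N
      have hterm : ∀ k ∈ Finset.Icc 1 N, (1 - (1 - 2 * Real.exp (a ^ (k - 1) - a ^ k)))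
          = 2 * Real.exp (a ^ (k - 1) - a ^ k) := fun k _ => by ring
      rw [Finset.prod_congr rfl hterm, Finset.prod_mul_distrib, Finset.prod_const,
        ← Real.exp_sum]
      have hcard : (Finset.Icc 1 N).card = N := by simp
      have hsum : ∑ k ∈ Finset.Icc 1 N, (a ^ (k - 1) - a ^ k) = 1 - a ^ N := by
        clear hterm hcard
        induction N with
        | zero => simp
        | succ n ih =>
          rw [Finset.sum_Icc_succ_top (Nat.one_le_iff_ne_zero.mpr (Nat.succ_ne_zero n)), ih]
          simp [pow_succ]
      rw [hcard, hsum]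
      rw [show (2:ℝ) = Real.exp (Real.log 2) from (Real.exp_log (by norm_num)).symm,
        ← Real.exp_nat_mul, ← Real.exp_add]
      norm_num
    simp only [hcalc]
    apply Real.tendsto_exp_atBot.comp
    apply tendsto_atBot_mono (f := fun N : ℕ => (N : ℝ) * (Real.log 2 - (a - 1)))
    · intro N
      have hbern : 1 + (N : ℝ) * (a - 1) ≤ a ^ N := by
        have := one_add_mul_le_pow (a := a - 1) (by linarith) N
        simpa using this
      have hN : (0:ℝ) ≤ (N : ℝ) := Nat.cast_nonneg N
      nlinarith
    · apply Tendsto.atTop_mul_const_of_neg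
      · have hlog2 : Real.log 2 < 1 := by
          have := Real.log_lt_sub_one_of_pos (x := 2) (by norm_num) (by norm_num)
          linarith
        linarith
      · exact tendsto_natCast_atTop_atTop
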